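/- For any positive semidefinite block matrix [[A, X],[X*, B]] in M_{2n} with n×n blocks, the smallest eigenvalue satisfies λ_{2n}↑([[A, X],[X*, B]]) ≥ 0 and λ_{2n−1}([[A, X],[X*, B]]) ≤ λ_n(A) + λ_n(B) ≤ λ_n(A + B), where λ_k denotes eigenvalues in decreasing order. -/

import Mathlib

open scoped Matrix ComplexOrder

noncomputable section

/-- The numerical range of a matrix. -/
def numRange {m : Type*} [Fintype m] (X : Matrix m m ℂ) : Set ℂ :=
  {z | ∃ v : m → ℂ, star v ⬝ᵥ v = 1 ∧ z = star v ⬝ᵥ X.mulVec v}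

/-- The inradius of a subset of the plane: the radius of the largest disc it contains. -/
def inRad (S : Set ℂ) : ℝ := sSup {r : ℝ | ∃ c : ℂ, Metric.closedBall c r ⊆ S}

/-- The indiameter: the diameter of the largest disc contained in the set. -/
def inDiam (S : Set ℂ) : ℝ := 2 * inRad S

/-- The numerical range of the compression of `X` to the subspace `S`. -/
def nrOn {m : Type*} [Fintype m] (X : Matrix m m ℂ) (S : Submodule ℂ (m → ℂ)) : Set ℂ :=
  {z | ∃ v ∈ S, star v ⬝ᵥ v = 1 ∧ z = star v ⬝ᵥ X.mulVec v}

/-- The elliptical width `δ₂(X)`: the supremum of the indiameters of the numerical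
ranges of compressions of `X` to two-dimensional subspaces. -/
def ellWidth {m : Type*} [Fintype m] (X : Matrix m m ℂ) : ℝ :=
  sSup {d | ∃ S : Submodule ℂ (m → ℂ), Module.finrank ℂ S = 2 ∧ d = inDiam (nrOn X S)}

/-- The operator (spectral) norm of a matrix. -/
def opNorm {m : Type*} [Fintype m] [DecidableEq m] (M : Matrix m m ℂ) : ℝ :=
  ‖Matrix.toEuclideanCLM (𝕜 := ℂ) M‖

/-- The Frobenius (Hilbert–Schmidt) norm of a matrix. -/
def frobNorm {m : Type*} [Fintype m] (M : Matrix m m ℂ) : ℝ :=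
  Real.sqrt ((Matrix.trace (Mᴴ * M)).re)

/-- Eigenvalues of a Hermitian matrix in decreasing order (junk value `0` otherwise):
`eigDesc M k` is the `(k+1)`-th largest eigenvalue of `M`. -/
def eigDesc {m : ℕ} (M : Matrix (Fin m) (Fin m) ℂ) (k : Fin m) : ℝ :=
  if h : M.IsHermitian then (h.eigenvalues ∘ Tuple.sort h.eigenvalues) k.rev else 0

/-- The absolute value `|X| = (XᴴX)^(1/2)` of a matrix. -/
def matAbs {m : Type*} [Fintype m] [DecidableEq m] (X : Matrix m m ℂ) : Matrix m m ℂ :=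
  (Matrix.posSemidef_conjTranspose_mul_self X).1.eigenvectorUnitary.1 *
    Matrix.diagonal ((↑) ∘ Real.sqrt ∘ (Matrix.posSemidef_conjTranspose_mul_self X).1.eigenvalues) *
    (star (Matrix.posSemidef_conjTranspose_mul_self X).1.eigenvectorUnitary : Matrix m m ℂ)

/-- The `2n × 2n` block matrix `[[A, X],[Xᴴ, B]]`, reindexed by `Fin (n+n)`. -/
def blockR {n : ℕ} (A X B : Matrix (Fin n) (Fin n) ℂ) :
    Matrix (Fin (n + n)) (Fin (n + n)) ℂ :=
  (Matrix.fromBlocks A X Xᴴ B).submatrix finSumFinEquiv.symm finSumFinEquiv.symm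

/-- The operator norm distance from `X` to the scalar matrices. -/
def distScalar {m : Type*} [Fintype m] [DecidableEq m] (X : Matrix m m ℂ) : ℝ :=
  ⨅ a : ℂ, opNorm (X - a • 1)

/-- Apply a real function to a Hermitian matrix by the functional calculus
(junk value `0` if the matrix is not Hermitian). -/
def hermApply {m : Type*} [Fintype m] [DecidableEq m] (f : ℝ → ℝ) (M : Matrix m m ℂ) :
    Matrix m m ℂ :=
  if h : M.IsHermitian then h.cfc f else 0

end

namespace Stmt5Aux
open Matrix
open scoped ComplexOrder InnerProductSpace

noncomputable section
variable {m : ℕ}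

open Matrix
open scoped ComplexOrder InnerProductSpace

variable {m : ℕ}

lemma unit_dot (b : OrthonormalBasis (Fin m) ℂ (EuclideanSpace ℂ (Fin m))) (i : Fin m) :
    star ⇑(b i) ⬝ᵥ ⇑(b i) = (1 : ℂ) := by
  have h1 : ⟪b i, b i⟫_ℂ = 1 := by
    rw [inner_self_eq_norm_sq_to_K, b.orthonormal.1 i]; norm_num
  rw [EuclideanSpace.inner_eq_star_dotProduct, dotProduct_comm] at h1
  exact h1

lemma herm_quad {M : Matrix (Fin m) (Fin m) ℂ} (hH : M.IsHermitian)
    (x : EuclideanSpace ℂ (Fin m)) :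
    ⟪x, (WithLp.toLp 2 (M *ᵥ x) : EuclideanSpace ℂ (Fin m))⟫_ℂ =
      ∑ i, (hH.eigenvalues i : ℂ) *
        ((Complex.normSq ⟪hH.eigenvectorBasis i, x⟫_ℂ : ℝ) : ℂ) := by
  rw [← OrthonormalBasis.sum_inner_mul_inner hH.eigenvectorBasis]
  refine Finset.sum_congr rfl fun i _ => ?_
  have h1 : ⟪hH.eigenvectorBasis i, (WithLp.toLp 2 (M *ᵥ x) : EuclideanSpace ℂ (Fin m))⟫_ℂ
      = (hH.eigenvalues i : ℂ) * ⟪hH.eigenvectorBasis i, x⟫_ℂ := by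
    rw [EuclideanSpace.inner_eq_star_dotProduct, EuclideanSpace.inner_eq_star_dotProduct,
      dotProduct_comm, dotProduct_comm x.ofLp]
    show star ⇑(hH.eigenvectorBasis i) ⬝ᵥ (M *ᵥ x) = _ * (star ⇑(hH.eigenvectorBasis i) ⬝ᵥ x)
    rw [Matrix.dotProduct_mulVec]
    have : star ⇑(hH.eigenvectorBasis i) ᵥ* M = star (M *ᵥ ⇑(hH.eigenvectorBasis i)) := by
      rw [Matrix.star_mulVec, hH.eq]
    rw [this, hH.mulVec_eigenvectorBasis]
    simp [star_smul, smul_dotProduct]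
  rw [h1, ← inner_conj_symm x (hH.eigenvectorBasis i)]
  push_cast [Complex.normSq_eq_conj_mul_self]
  ring

lemma parseval (b : OrthonormalBasis (Fin m) ℂ (EuclideanSpace ℂ (Fin m)))
    (x : EuclideanSpace ℂ (Fin m)) :
    ‖x‖ ^ 2 = ∑ i, Complex.normSq ⟪b i, x⟫_ℂ := by
  have := b.sum_inner_mul_inner x x
  have h2 : (⟪x, x⟫_ℂ).re = ‖x‖ ^ 2 := by
    rw [inner_self_eq_norm_sq_to_K]; norm_cast
  rw [← h2, ← this]
  rw [Complex.re_sum]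
  refine Finset.sum_congr rfl fun i _ => ?_
  rw [← inner_conj_symm x (b i), mul_comm, Complex.mul_conj]
  simp

lemma key_lb {M : Matrix (Fin m) (Fin m) ℂ} (hH : M.IsHermitian)
    (x : EuclideanSpace ℂ (Fin m)) (t : ℝ)
    (h : ∀ i, ⟪hH.eigenvectorBasis i, x⟫_ℂ ≠ 0 → t ≤ hH.eigenvalues i) :
    t * ‖x‖ ^ 2 ≤ (⟪x, (WithLp.toLp 2 (M *ᵥ x) : EuclideanSpace ℂ (Fin m))⟫_ℂ).re := by
  rw [herm_quad hH x, Complex.re_sum, parseval hH.eigenvectorBasis x, Finset.mul_sum]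
  refine Finset.sum_le_sum fun i _ => ?_
  rcases eq_or_ne ⟪hH.eigenvectorBasis i, x⟫_ℂ 0 with h0 | h0
  · simp [h0]
  · have h1 := h i h0
    have hns : 0 ≤ Complex.normSq ⟪hH.eigenvectorBasis i, x⟫_ℂ := Complex.normSq_nonneg _
    have : t * Complex.normSq ⟪hH.eigenvectorBasis i, x⟫_ℂ ≤
        hH.eigenvalues i * Complex.normSq ⟪hH.eigenvectorBasis i, x⟫_ℂ :=
      mul_le_mul_of_nonneg_right h1 hns
    simpa using this

/-- dotProduct version of `key_lb`. -/
lemma key_lb' {M : Matrix (Fin m) (Fin m) ℂ} (hH : M.IsHermitian)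
    (x : Fin m → ℂ) (t : ℝ)
    (h : ∀ i, star ⇑(hH.eigenvectorBasis i) ⬝ᵥ x ≠ 0 → t ≤ hH.eigenvalues i) :
    t * (star x ⬝ᵥ x).re ≤ (star x ⬝ᵥ M *ᵥ x).re := by
  set x' : EuclideanSpace ℂ (Fin m) := (WithLp.equiv 2 (Fin m → ℂ)).symm x with hx'
  have h1 := key_lb hH x' t (fun i hi => h i (by
    rw [EuclideanSpace.inner_eq_star_dotProduct, dotProduct_comm] at hi; exact hi))
  have h2 : (‖x'‖ : ℝ) ^ 2 = (star x ⬝ᵥ x).re := by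
    have := inner_self_eq_norm_sq_to_K (𝕜 := ℂ) x'
    rw [EuclideanSpace.inner_eq_star_dotProduct, dotProduct_comm] at this
    have h3 : (star x ⬝ᵥ x) = ((‖x'‖ : ℂ)) ^ 2 := this
    rw [h3]; norm_cast
  have h4 : (⟪x', (WithLp.toLp 2 (M *ᵥ x') : EuclideanSpace ℂ (Fin m))⟫_ℂ) = star x ⬝ᵥ M *ᵥ x := by
    rw [EuclideanSpace.inner_eq_star_dotProduct, dotProduct_comm]; rfl
  rw [h2] at h1
  have h5 : (WithLp.toLp 2 (M *ᵥ x) : EuclideanSpace ℂ (Fin m)) = (WithLp.toLp 2 (M *ᵥ x') : EuclideanSpace ℂ (Fin m)) := rfl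
  rw [← h4]
  exact h1


lemma sorted_min_le (g : Fin m → ℝ) (hm : 0 < m) (i : Fin m) :
    g (Tuple.sort g ⟨0, hm⟩) ≤ g i := by
  have h1 := Tuple.monotone_sort g
  have h2 : g i = (g ∘ Tuple.sort g) ((Tuple.sort g).symm i) := by simp
  rw [h2]
  exact h1 (by simp [Fin.le_def])

lemma sorted_second_le (g : Fin m → ℝ) (hm : 1 < m) (i : Fin m)
    (hi : i ≠ Tuple.sort g ⟨0, by omega⟩) :
    g (Tuple.sort g ⟨1, hm⟩) ≤ g i := by
  have h1 := Tuple.monotone_sort g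
  have h2 : g i = (g ∘ Tuple.sort g) ((Tuple.sort g).symm i) := by simp
  rw [h2]
  refine h1 ?_
  have h3 : (Tuple.sort g).symm i ≠ ⟨0, by omega⟩ := by
    intro h
    exact hi (by rw [← h]; simp)
  rw [Fin.le_def]
  have h4 := Fin.val_ne_of_ne h3
  simp only [Fin.val_mk] at h4 ⊢
  omega

lemma cross_bound {a b : ℝ} (ha : 0 ≤ a) (hb : 0 ≤ b) (x₀ : ℂ)
    (hq : ∀ s t : ℂ, 0 ≤ ((starRingEnd ℂ) s * s * (a : ℂ) + (starRingEnd ℂ) t * t * (b : ℂ)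
      + (starRingEnd ℂ) s * t * x₀ + (starRingEnd ℂ) t * s * (starRingEnd ℂ) x₀).re)
    (α β : ℂ) :
    ((starRingEnd ℂ) α * β * x₀ + (starRingEnd ℂ) β * α * (starRingEnd ℂ) x₀).re ≤
      Complex.normSq β * a + Complex.normSq α * b := by
  have key : 2 * ‖α‖ * ‖β‖ * ‖x₀‖ ≤
      Complex.normSq β * a + Complex.normSq α * b := by
    rcases eq_or_ne x₀ 0 with h0 | h0
    · simp only [h0, map_zero, mul_zero, norm_zero]
      have := mul_nonneg (Complex.normSq_nonneg β) ha
      have := mul_nonneg (Complex.normSq_nonneg α) hb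
      linarith
    · set r : ℝ := ‖x₀‖ with hr
      have hrpos : 0 < r := norm_pos_iff.mpr h0
      set c : ℝ := ‖β‖ / r with hc
      have h := hq (-(c : ℂ) * x₀) ((‖α‖ : ℝ) : ℂ)
      have hx2 : (starRingEnd ℂ) x₀ * x₀ = (Complex.normSq x₀ : ℂ) :=
        (Complex.normSq_eq_conj_mul_self).symm
      have hE : ((starRingEnd ℂ) (-(c : ℂ) * x₀) * (-(c : ℂ) * x₀) * (a : ℂ)
          + (starRingEnd ℂ) ((‖α‖ : ℝ) : ℂ) * ((‖α‖ : ℝ) : ℂ) * (b : ℂ)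
          + (starRingEnd ℂ) (-(c : ℂ) * x₀) * ((‖α‖ : ℝ) : ℂ) * x₀
          + (starRingEnd ℂ) ((‖α‖ : ℝ) : ℂ) * (-(c : ℂ) * x₀) * (starRingEnd ℂ) x₀)
          = ((c ^ 2 * Complex.normSq x₀ * a + ‖α‖ ^ 2 * b
              - 2 * c * ‖α‖ * Complex.normSq x₀ : ℝ) : ℂ) := by
        simp only [_root_.map_mul, map_neg, Complex.conj_ofReal]
        push_cast
        linear_combination ((c : ℂ) ^ 2 * (a : ℂ) - 2 * (c : ℂ) * (‖α‖ : ℂ)) * hx2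
      rw [hE, Complex.ofReal_re] at h
      have e1 : Complex.normSq x₀ = r ^ 2 := (Complex.sq_norm x₀).symm
      have e2 : Complex.normSq β = ‖β‖ ^ 2 := (Complex.sq_norm β).symm
      have e3 : Complex.normSq α = ‖α‖ ^ 2 := (Complex.sq_norm α).symm
      have hr0 : r ≠ 0 := ne_of_gt hrpos
      have f1 : c ^ 2 * r ^ 2 = ‖β‖ ^ 2 := by
        rw [hc]; field_simp
      have f2 : c * ‖α‖ * r ^ 2 = ‖β‖ * ‖α‖ * r := by
        rw [hc]; field_simp
      rw [e1] at h
      rw [e2, e3]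
      nlinarith [h, f1, f2]
  have h5 : ((starRingEnd ℂ) α * β * x₀ + (starRingEnd ℂ) β * α * (starRingEnd ℂ) x₀).re
      = 2 * ((starRingEnd ℂ) α * β * x₀).re := by
    have : (starRingEnd ℂ) β * α * (starRingEnd ℂ) x₀
        = (starRingEnd ℂ) ((starRingEnd ℂ) α * β * x₀) := by
      simp only [_root_.map_mul, Complex.conj_conj]; ring
    rw [this, Complex.add_conj]
    simp
  rw [h5]
  calc 2 * ((starRingEnd ℂ) α * β * x₀).re
      ≤ 2 * ‖(starRingEnd ℂ) α * β * x₀‖ := by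
        have := Complex.re_le_norm ((starRingEnd ℂ) α * β * x₀)
        linarith
    _ = 2 * ‖α‖ * ‖β‖ * ‖x₀‖ := by
        simp [_root_.map_mul]; ring
    _ ≤ _ := key

lemma conj_cross (X : Matrix (Fin n) (Fin n) ℂ) (u v : Fin n → ℂ) :
    star v ⬝ᵥ Xᴴ *ᵥ u = (starRingEnd ℂ) (star u ⬝ᵥ X *ᵥ v) := by
  rw [Matrix.dotProduct_mulVec, ← Matrix.star_mulVec]
  rw [Matrix.star_dotProduct]
  rfl

lemma quadQ (A B X : Matrix (Fin n) (Fin n) ℂ) (u v : Fin n → ℂ) (s t : ℂ) :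
    star (Sum.elim (s • u) (t • v)) ⬝ᵥ
      (Matrix.fromBlocks A X Xᴴ B) *ᵥ Sum.elim (s • u) (t • v)
    = (starRingEnd ℂ) s * s * (star u ⬝ᵥ A *ᵥ u)
      + (starRingEnd ℂ) t * t * (star v ⬝ᵥ B *ᵥ v)
      + (starRingEnd ℂ) s * t * (star u ⬝ᵥ X *ᵥ v)
      + (starRingEnd ℂ) t * s * ((starRingEnd ℂ) (star u ⬝ᵥ X *ᵥ v)) := by
  rw [← conj_cross]
  simp only [Function.star_sumElim, Matrix.fromBlocks_mulVec,
    sumElim_dotProduct_sumElim, Matrix.mulVec_smul, dotProduct_add,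
    dotProduct_smul, star_smul, smul_dotProduct, smul_eq_mul, star_star, Sum.elim_comp_inl, Sum.elim_comp_inr, Complex.star_def, Matrix.mulVec_smul, dotProduct_smul, smul_eq_mul]
  ring

lemma sub_quad {k : ℕ} {l : Type*} [Fintype l] [DecidableEq l] (e : l ≃ Fin k)
    (F : Matrix l l ℂ) (z : l → ℂ) :
    star (z ∘ e.symm) ⬝ᵥ (F.submatrix e.symm e.symm) *ᵥ (z ∘ e.symm) = star z ⬝ᵥ F *ᵥ z := by
  rw [Matrix.submatrix_mulVec_equiv]
  have h1 : (z ∘ ⇑e.symm) ∘ ⇑e.symm.symm = z := by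
    funext i; simp
  rw [h1]
  have h2 : star (z ∘ ⇑e.symm) = star z ∘ ⇑e.symm := rfl
  rw [h2]
  exact comp_equiv_dotProduct_comp_equiv _ _ _

lemma sub_dot {k : ℕ} {l : Type*} [Fintype l] (e : l ≃ Fin k) (z w : l → ℂ) :
    star (z ∘ e.symm) ⬝ᵥ (w ∘ e.symm) = star z ⬝ᵥ w := by
  have h2 : star (z ∘ ⇑e.symm) = star z ∘ ⇑e.symm := rfl
  rw [h2]
  exact comp_equiv_dotProduct_comp_equiv _ _ _


lemma eigDesc_eq {M : Matrix (Fin m) (Fin m) ℂ} (hH : M.IsHermitian) (k : Fin m) :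
    eigDesc M k = hH.eigenvalues (Tuple.sort hH.eigenvalues k.rev) := by
  rw [eigDesc, dif_pos hH]; rfl

end
end Stmt5Aux

open Stmt5Aux Matrix
open scoped InnerProductSpace

set_option maxHeartbeats 2000000 in
/-- For a positive semidefinite block matrix, the smallest eigenvalue is
nonnegative and `λ_{2n-1}([[A,X],[Xᴴ,B]]) ≤ λ_n(A) + λ_n(B) ≤ λ_n(A + B)`. -/
theorem stmt5 {n : ℕ} (hn : 0 < n) (A B X : Matrix (Fin n) (Fin n) ℂ)
    (hP : (Matrix.fromBlocks A X Xᴴ B).PosSemidef) :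
    0 ≤ eigDesc (blockR A X B) ⟨n + n - 1, by omega⟩ ∧
    eigDesc (blockR A X B) ⟨n + n - 2, by omega⟩ ≤
      eigDesc A ⟨n - 1, by omega⟩ + eigDesc B ⟨n - 1, by omega⟩ ∧
    eigDesc A ⟨n - 1, by omega⟩ + eigDesc B ⟨n - 1, by omega⟩ ≤
      eigDesc (A + B) ⟨n - 1, by omega⟩ := by
  classical
  have hN2 : 1 < n + n := by omega
  have hMR : (blockR A X B).PosSemidef := by
    unfold blockR; exact hP.submatrix _
  have hMH : (blockR A X B).IsHermitian := hMR.1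
  have hApsd : A.PosSemidef := by
    have h := hP.submatrix (Sum.inl : Fin n → Fin n ⊕ Fin n)
    have he : (Matrix.fromBlocks A X Xᴴ B).submatrix Sum.inl Sum.inl = A := by
      ext i j; rfl
    rwa [he] at h
  have hBpsd : B.PosSemidef := by
    have h := hP.submatrix (Sum.inr : Fin n → Fin n ⊕ Fin n)
    have he : (Matrix.fromBlocks A X Xᴴ B).submatrix Sum.inr Sum.inr = B := by
      ext i j; rfl
    rwa [he] at h
  have hAH := hApsd.1
  have hBH := hBpsd.1
  have hrevn : (⟨n - 1, by omega⟩ : Fin n).rev = ⟨0, hn⟩ := by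
    ext; simp only [Fin.val_rev, Fin.val_mk]; omega
  refine ⟨?_, ?_, ?_⟩
  · -- part (a)
    rw [eigDesc_eq hMH]
    exact hMR.eigenvalues_nonneg _
  · -- part (b)
    have hrev2 : (⟨n + n - 2, by omega⟩ : Fin (n + n)).rev = ⟨1, hN2⟩ := by
      ext; simp only [Fin.val_rev, Fin.val_mk]; omega
    rw [eigDesc_eq hMH, eigDesc_eq hAH, eigDesc_eq hBH, hrev2, hrevn]
    set iA := Tuple.sort hAH.eigenvalues ⟨0, hn⟩ with hiA
    set iB := Tuple.sort hBH.eigenvalues ⟨0, hn⟩ with hiB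
    set u : Fin n → ℂ := ⇑(hAH.eigenvectorBasis iA) with hu
    set v : Fin n → ℂ := ⇑(hBH.eigenvectorBasis iB) with hv
    set a' : ℝ := hAH.eigenvalues iA with ha'
    set b' : ℝ := hBH.eigenvalues iB with hb'
    have ha0 : 0 ≤ a' := hApsd.eigenvalues_nonneg iA
    have hb0 : 0 ≤ b' := hBpsd.eigenvalues_nonneg iB
    have hu1 : star u ⬝ᵥ u = 1 := unit_dot _ _
    have hv1 : star v ⬝ᵥ v = 1 := unit_dot _ _
    have hAu : star u ⬝ᵥ A *ᵥ u = (a' : ℂ) := by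
      rw [show A *ᵥ u = hAH.eigenvalues iA • u from hAH.mulVec_eigenvectorBasis iA]
      rw [dotProduct_smul, hu1]
      simp [Complex.real_smul, ha']
    have hBv : star v ⬝ᵥ B *ᵥ v = (b' : ℂ) := by
      rw [show B *ᵥ v = hBH.eigenvalues iB • v from hBH.mulVec_eigenvectorBasis iB]
      rw [dotProduct_smul, hv1]
      simp [Complex.real_smul, hb']
    set x₀ : ℂ := star u ⬝ᵥ X *ᵥ v with hx₀
    have hq : ∀ s t : ℂ, 0 ≤ ((starRingEnd ℂ) s * s * (a' : ℂ) + (starRingEnd ℂ) t * t * (b' : ℂ)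
        + (starRingEnd ℂ) s * t * x₀ + (starRingEnd ℂ) t * s * ((starRingEnd ℂ) x₀)).re := by
      intro s t
      have h := hP.re_dotProduct_nonneg (Sum.elim (s • u) (t • v))
      rw [RCLike.re_eq_complex_re] at h
      rwa [quadQ A B X u v s t, hAu, hBv] at h
    set i₀ := Tuple.sort hMH.eigenvalues ⟨0, by omega⟩ with hi₀
    set f := hMH.eigenvectorBasis with hf
    set p : Fin (n + n) → ℂ := (Sum.elim u 0) ∘ finSumFinEquiv.symm with hp
    set q : Fin (n + n) → ℂ := (Sum.elim 0 v) ∘ finSumFinEquiv.symm with hqq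
    set c := star ⇑(f i₀) ⬝ᵥ p with hc
    set d := star ⇑(f i₀) ⬝ᵥ q with hd
    obtain ⟨α, β, hne, horth⟩ : ∃ α β : ℂ, ¬(α = 0 ∧ β = 0) ∧ α * c + β * d = 0 := by
      rcases eq_or_ne c 0 with h0 | h0
      · exact ⟨1, 0, by simp, by simp [h0]⟩
      · exact ⟨d, -c, fun h => h0 (by simpa using h.2), by ring⟩
    set z : Fin n ⊕ Fin n → ℂ := Sum.elim (α • u) (β • v) with hz
    set y : Fin (n + n) → ℂ := z ∘ finSumFinEquiv.symm with hy
    have hyq : star y ⬝ᵥ (blockR A X B) *ᵥ y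
        = (starRingEnd ℂ) α * α * (a' : ℂ) + (starRingEnd ℂ) β * β * (b' : ℂ)
          + ((starRingEnd ℂ) α * β * x₀ + (starRingEnd ℂ) β * α * ((starRingEnd ℂ) x₀)) := by
      rw [hy, hz]
      unfold blockR
      rw [sub_quad finSumFinEquiv (Matrix.fromBlocks A X Xᴴ B) _]
      rw [quadQ A B X u v α β, hAu, hBv]
      ring
    have hynorm : star y ⬝ᵥ y = ((Complex.normSq α + Complex.normSq β : ℝ) : ℂ) := by
      rw [hy, sub_dot finSumFinEquiv, hz]
      simp only [Function.star_sumElim, sumElim_dotProduct_sumElim,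
        star_smul, smul_dotProduct, dotProduct_smul, hu1, hv1,
        smul_eq_mul, Complex.star_def, mul_one]
      rw [Complex.mul_conj, Complex.mul_conj]
      push_cast
      ring
    have hylin : y = α • p + β • q := by
      funext k
      simp only [hy, hz, hp, hqq, Function.comp_apply, Pi.add_apply, Pi.smul_apply]
      rcases finSumFinEquiv.symm k with i | i <;> simp
    have horth' : star ⇑(f i₀) ⬝ᵥ y = 0 := by
      rw [hylin, dotProduct_add, dotProduct_smul, dotProduct_smul,
        ← hc, ← hd]
      simpa using horth
    have hS : 0 < Complex.normSq α + Complex.normSq β := by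
      rcases eq_or_ne α 0 with hα | hα
      · have hβ : β ≠ 0 := fun hβ => hne ⟨hα, hβ⟩
        have := Complex.normSq_pos.2 hβ
        have := Complex.normSq_nonneg α
        linarith
      · have := Complex.normSq_pos.2 hα
        have := Complex.normSq_nonneg β
        linarith
    have hkey := key_lb' hMH y (hMH.eigenvalues (Tuple.sort hMH.eigenvalues ⟨1, hN2⟩)) ?_
    · rw [hynorm, hyq, Complex.ofReal_re] at hkey
      have hre : ((starRingEnd ℂ) α * α * (a' : ℂ) + (starRingEnd ℂ) β * β * (b' : ℂ)
          + ((starRingEnd ℂ) α * β * x₀ + (starRingEnd ℂ) β * α * ((starRingEnd ℂ) x₀))).re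
          = Complex.normSq α * a' + Complex.normSq β * b'
            + ((starRingEnd ℂ) α * β * x₀ + (starRingEnd ℂ) β * α * ((starRingEnd ℂ) x₀)).re := by
        rw [mul_comm ((starRingEnd ℂ) α) α, mul_comm ((starRingEnd ℂ) β) β,
          Complex.mul_conj, Complex.mul_conj]
        simp [Complex.add_re, Complex.ofReal_re]
      rw [hre] at hkey
      have hcross := cross_bound ha0 hb0 x₀ hq α β
      have hfinal : hMH.eigenvalues (Tuple.sort hMH.eigenvalues ⟨1, hN2⟩)
          * (Complex.normSq α + Complex.normSq β)
          ≤ (a' + b') * (Complex.normSq α + Complex.normSq β) := by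
        nlinarith [hkey, hcross]
      exact le_of_mul_le_mul_right hfinal hS
    · intro i hi
      rcases eq_or_ne i i₀ with h0 | h0
      · exact absurd (h0 ▸ hi) (by simp [← hf, horth'])
      · exact sorted_second_le hMH.eigenvalues hN2 i h0
  · -- part (c)
    have hABH : (A + B).IsHermitian := hAH.add hBH
    rw [eigDesc_eq hAH, eigDesc_eq hBH, eigDesc_eq hABH, hrevn]
    set iAB := Tuple.sort hABH.eigenvalues ⟨0, hn⟩ with hiAB
    set w : Fin n → ℂ := ⇑(hABH.eigenvectorBasis iAB) with hw
    have hw1 : star w ⬝ᵥ w = 1 := unit_dot _ _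
    have hval : hABH.eigenvalues iAB = (star w ⬝ᵥ (A + B) *ᵥ w).re := by
      have := hABH.eigenvalues_eq iAB
      rwa [RCLike.re_eq_complex_re] at this
    have hsplit : star w ⬝ᵥ (A + B) *ᵥ w = star w ⬝ᵥ A *ᵥ w + star w ⬝ᵥ B *ᵥ w := by
      rw [Matrix.add_mulVec, dotProduct_add]
    have hwre : (star w ⬝ᵥ w).re = 1 := by rw [hw1]; simp
    have hAlow := key_lb' hAH w (hAH.eigenvalues (Tuple.sort hAH.eigenvalues ⟨0, hn⟩))
      (fun i _ => sorted_min_le _ hn i)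
    have hBlow := key_lb' hBH w (hBH.eigenvalues (Tuple.sort hBH.eigenvalues ⟨0, hn⟩))
      (fun i _ => sorted_min_le _ hn i)
    rw [hwre, mul_one] at hAlow hBlow
    rw [hval, hsplit, Complex.add_re]
    linarith
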